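/- On ℝ⁸ with coordinates (x, t, u, p, q, r, s, w) (standing for x, λ, u, u_x, u_y, u_xx, u_xy, u_yy), define e₁ = −(∂_x + p∂_u + r∂_p + s∂_q + t∂_r + (t²/2)∂_s + (t³/3)∂_w), e₁' = ∂_t, e₂ = ∂_r + t∂_s + t²∂_w, e₃ = ∂_p + t∂_q, e₃' = ∂_s + 2t∂_w, e₄ = ∂_u, e₄' = ∂_q, e₄'' = 2∂_w. Then these eight vector fields satisfy [e₁,e₁'] = e₂, [e₁,e₂] = e₃, [e₁',e₂] = e₃', [e₁,e₃] = e₄, [e₁,e₃'] = [e₁',e₃] = e₄', [e₁',e₃'] = e₄'', and [e₁,e₄] = [e₁,e₄'] = [e₁,e₄''] = [e₁',e₄] = [e₁',e₄'] = [e₁',e₄''] = [e₂,e₃] = 0, and they are pointwise linearly independent. -/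

import Mathlib

set_option linter.unreachableTactic false
set_option linter.unusedTactic false

/-- Lie bracket of vector fields on ℝⁿ. -/
noncomputable def lie {n : ℕ} (X Y : (Fin n → ℝ) → (Fin n → ℝ)) :
    (Fin n → ℝ) → (Fin n → ℝ) :=
  fun p => fderiv ℝ Y p (X p) - fderiv ℝ X p (Y p)

/- Coordinates on ℝ⁸: (x, t, u, p, q, r, s, w) = (P 0, …, P 7),
standing for (x, λ, u, u_x, u_y, u_xx, u_xy, u_yy). -/
noncomputable def E1 : (Fin 8 → ℝ) → (Fin 8 → ℝ) :=
  fun P => -![1, 0, P 3, P 5, P 6, P 1, (P 1) ^ 2 / 2, (P 1) ^ 3 / 3]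

noncomputable def E1' : (Fin 8 → ℝ) → (Fin 8 → ℝ) := fun _ => ![0, 1, 0, 0, 0, 0, 0, 0]

noncomputable def E2 : (Fin 8 → ℝ) → (Fin 8 → ℝ) :=
  fun P => ![0, 0, 0, 0, 0, 1, P 1, (P 1) ^ 2]

noncomputable def E3 : (Fin 8 → ℝ) → (Fin 8 → ℝ) :=
  fun P => ![0, 0, 0, 1, P 1, 0, 0, 0]

noncomputable def E3' : (Fin 8 → ℝ) → (Fin 8 → ℝ) :=
  fun P => ![0, 0, 0, 0, 0, 0, 1, 2 * P 1]

noncomputable def E4 : (Fin 8 → ℝ) → (Fin 8 → ℝ) := fun _ => ![0, 0, 1, 0, 0, 0, 0, 0]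

noncomputable def E4' : (Fin 8 → ℝ) → (Fin 8 → ℝ) := fun _ => ![0, 0, 0, 0, 1, 0, 0, 0]

noncomputable def E4'' : (Fin 8 → ℝ) → (Fin 8 → ℝ) := fun _ => ![0, 0, 0, 0, 0, 0, 0, 2]

/-! ### Auxiliary machinery -/

noncomputable abbrev pr (j : Fin 8) : (Fin 8 → ℝ) →L[ℝ] ℝ := ContinuousLinearMap.proj j

private lemma congrD {f g : (Fin 8 → ℝ) → ℝ} {f' g' : (Fin 8 → ℝ) →L[ℝ] ℝ} {x : Fin 8 → ℝ}
    (h : HasFDerivAt f f' x) (hfg : ∀ y, f y = g y) (h' : ∀ v, f' v = g' v) :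
    HasFDerivAt g g' x := by
  have e1 : f = g := funext hfg
  have e2 : f' = g' := ContinuousLinearMap.ext h'
  rw [← e1, ← e2]; exact h

private theorem v5 {α : Type*} (a b c d e f g h : α) :
    (![a,b,c,d,e,f,g,h] : Fin 8 → α) 5 = f := rfl
private theorem v6 {α : Type*} (a b c d e f g h : α) :
    (![a,b,c,d,e,f,g,h] : Fin 8 → α) 6 = g := rfl
private theorem v7 {α : Type*} (a b c d e f g h : α) :
    (![a,b,c,d,e,f,g,h] : Fin 8 → α) 7 = h := rfl

/-- Derivative of `E1`. -/
noncomputable def D1 (P : Fin 8 → ℝ) : (Fin 8 → ℝ) →L[ℝ] (Fin 8 → ℝ) :=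
  ContinuousLinearMap.pi ![0, 0, -pr 3, -pr 5, -pr 6, -pr 1, -(P 1 • pr 1), -((P 1)^2 • pr 1)]

/-- Derivative of `E2`. -/
noncomputable def D2 (P : Fin 8 → ℝ) : (Fin 8 → ℝ) →L[ℝ] (Fin 8 → ℝ) :=
  ContinuousLinearMap.pi ![0, 0, 0, 0, 0, 0, pr 1, (2 * P 1) • pr 1]

/-- Derivative of `E3`. -/
noncomputable def D3 : (Fin 8 → ℝ) →L[ℝ] (Fin 8 → ℝ) :=
  ContinuousLinearMap.pi ![0, 0, 0, 0, pr 1, 0, 0, 0]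

/-- Derivative of `E3'`. -/
noncomputable def D3' : (Fin 8 → ℝ) →L[ℝ] (Fin 8 → ℝ) :=
  ContinuousLinearMap.pi ![0, 0, 0, 0, 0, 0, 0, (2:ℝ) • pr 1]

lemma hE1 (P : Fin 8 → ℝ) : HasFDerivAt E1 (D1 P) P := by
  apply hasFDerivAt_pi''
  intro i
  fin_cases i <;> simp only [E1, D1]
  · exact congrD (hasFDerivAt_const 1 P).neg (fun y => rfl) (fun v => by change -(0:ℝ) = 0; simp)
  · exact congrD (hasFDerivAt_const 0 P).neg (fun y => rfl) (fun v => by change -(0:ℝ) = 0; simp)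
  · exact congrD (hasFDerivAt_apply 3 P).neg (fun y => rfl) (fun v => rfl)
  · exact congrD (hasFDerivAt_apply 5 P).neg (fun y => rfl) (fun v => rfl)
  · exact congrD (hasFDerivAt_apply 6 P).neg (fun y => rfl) (fun v => rfl)
  · exact congrD (hasFDerivAt_apply 1 P).neg (fun y => rfl) (fun v => rfl)
  · exact congrD (((hasFDerivAt_apply (1 : Fin 8) P).mul
      (hasFDerivAt_apply (1 : Fin 8) P)).mul_const (1/2 : ℝ)).neg
      (fun y => by change _ = -(y 1 ^ 2 / 2); simp only [Pi.neg_apply, Pi.mul_apply, Pi.pow_apply]; ring)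
      (fun v => by change _ = -(P 1 * v 1); simp; ring)
  · exact congrD ((((hasFDerivAt_apply (1 : Fin 8) P).mul
      (hasFDerivAt_apply (1 : Fin 8) P)).mul (hasFDerivAt_apply (1 : Fin 8) P)).mul_const
      (1/3 : ℝ)).neg
      (fun y => by change _ = -(y 1 ^ 3 / 3); simp only [Pi.neg_apply, Pi.mul_apply, Pi.pow_apply]; ring)
      (fun v => by change _ = -(P 1 ^ 2 * v 1); simp; ring)

lemma hE2 (P : Fin 8 → ℝ) : HasFDerivAt E2 (D2 P) P := by
  apply hasFDerivAt_pi''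
  intro i
  fin_cases i <;> simp only [E2, D2]
  · exact congrD (hasFDerivAt_const 0 P) (fun y => rfl) (fun v => rfl)
  · exact congrD (hasFDerivAt_const 0 P) (fun y => rfl) (fun v => rfl)
  · exact congrD (hasFDerivAt_const 0 P) (fun y => rfl) (fun v => rfl)
  · exact congrD (hasFDerivAt_const 0 P) (fun y => rfl) (fun v => rfl)
  · exact congrD (hasFDerivAt_const 0 P) (fun y => rfl) (fun v => rfl)
  · exact congrD (hasFDerivAt_const 1 P) (fun y => rfl) (fun v => rfl)
  · exact congrD (hasFDerivAt_apply 1 P) (fun y => rfl) (fun v => rfl)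
  · exact congrD ((hasFDerivAt_apply (1 : Fin 8) P).mul (hasFDerivAt_apply (1 : Fin 8) P))
      (fun y => by change _ = y 1 ^ 2; simp only [Pi.neg_apply, Pi.mul_apply, Pi.pow_apply]; ring)
      (fun v => by change _ = 2 * P 1 * v 1; simp; ring)

lemma hE3 (P : Fin 8 → ℝ) : HasFDerivAt E3 D3 P := by
  apply hasFDerivAt_pi''
  intro i
  fin_cases i <;> simp only [E3, D3]
  · exact congrD (hasFDerivAt_const 0 P) (fun y => rfl) (fun v => rfl)
  · exact congrD (hasFDerivAt_const 0 P) (fun y => rfl) (fun v => rfl)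
  · exact congrD (hasFDerivAt_const 0 P) (fun y => rfl) (fun v => rfl)
  · exact congrD (hasFDerivAt_const 1 P) (fun y => rfl) (fun v => rfl)
  · exact congrD (hasFDerivAt_apply 1 P) (fun y => rfl) (fun v => rfl)
  · exact congrD (hasFDerivAt_const 0 P) (fun y => rfl) (fun v => rfl)
  · exact congrD (hasFDerivAt_const 0 P) (fun y => rfl) (fun v => rfl)
  · exact congrD (hasFDerivAt_const 0 P) (fun y => rfl) (fun v => rfl)

lemma hE3' (P : Fin 8 → ℝ) : HasFDerivAt E3' D3' P := by
  apply hasFDerivAt_pi''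
  intro i
  fin_cases i <;> simp only [E3', D3']
  · exact congrD (hasFDerivAt_const 0 P) (fun y => rfl) (fun v => rfl)
  · exact congrD (hasFDerivAt_const 0 P) (fun y => rfl) (fun v => rfl)
  · exact congrD (hasFDerivAt_const 0 P) (fun y => rfl) (fun v => rfl)
  · exact congrD (hasFDerivAt_const 0 P) (fun y => rfl) (fun v => rfl)
  · exact congrD (hasFDerivAt_const 0 P) (fun y => rfl) (fun v => rfl)
  · exact congrD (hasFDerivAt_const 0 P) (fun y => rfl) (fun v => rfl)
  · exact congrD (hasFDerivAt_const 1 P) (fun y => rfl) (fun v => rfl)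
  · exact congrD ((hasFDerivAt_apply (1 : Fin 8) P).const_mul (2:ℝ))
      (fun y => rfl) (fun v => rfl)

lemma hE1' (P : Fin 8 → ℝ) : HasFDerivAt E1' (0 : (Fin 8 → ℝ) →L[ℝ] (Fin 8 → ℝ)) P :=
  hasFDerivAt_const _ _

lemma hE4 (P : Fin 8 → ℝ) : HasFDerivAt E4 (0 : (Fin 8 → ℝ) →L[ℝ] (Fin 8 → ℝ)) P :=
  hasFDerivAt_const _ _

lemma hE4' (P : Fin 8 → ℝ) : HasFDerivAt E4' (0 : (Fin 8 → ℝ) →L[ℝ] (Fin 8 → ℝ)) P :=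
  hasFDerivAt_const _ _

lemma hE4'' (P : Fin 8 → ℝ) : HasFDerivAt E4'' (0 : (Fin 8 → ℝ) →L[ℝ] (Fin 8 → ℝ)) P :=
  hasFDerivAt_const _ _

/-- The weak derived flag of the reduction of the 3E₃ system u_xxx=λ, u_xxy=λ²/2,
u_xyy=λ³/3, u_yyy=λ⁴/4: the bracket relations of the Carnot algebra with reduced
growth vector (2,1,2,3) hold, and the eight fields are pointwise independent. -/
theorem carnot_frame_3E3 :
    (lie E1 E1' = E2) ∧ (lie E1 E2 = E3) ∧ (lie E1' E2 = E3') ∧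
    (lie E1 E3 = E4) ∧ (lie E1 E3' = E4') ∧ (lie E1' E3 = E4') ∧
    (lie E1' E3' = E4'') ∧
    (lie E1 E4 = 0) ∧ (lie E1 E4' = 0) ∧ (lie E1 E4'' = 0) ∧
    (lie E1' E4 = 0) ∧ (lie E1' E4' = 0) ∧ (lie E1' E4'' = 0) ∧
    (lie E2 E3 = 0) ∧
    ∀ P, LinearIndependent ℝ
      ![E1 P, E1' P, E2 P, E3 P, E3' P, E4 P, E4' P, E4'' P] := by
  refine ⟨?_, ?_, ?_, ?_, ?_, ?_, ?_, ?_, ?_, ?_, ?_, ?_, ?_, ?_, ?_⟩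
  · funext P
    show fderiv ℝ E1' P (E1 P) - fderiv ℝ E1 P (E1' P) = E2 P
    rw [(hE1 P).fderiv, (hE1' P).fderiv]
    funext i
    fin_cases i <;>
      simp [D1, E1, E1', E2, v5, v6, v7, ContinuousLinearMap.pi_apply] <;> ring
  · funext P
    show fderiv ℝ E2 P (E1 P) - fderiv ℝ E1 P (E2 P) = E3 P
    rw [(hE1 P).fderiv, (hE2 P).fderiv]
    funext i
    fin_cases i <;>
      simp [D1, D2, E1, E2, E3, v5, v6, v7, ContinuousLinearMap.pi_apply] <;> ring
  · funext P
    show fderiv ℝ E2 P (E1' P) - fderiv ℝ E1' P (E2 P) = E3' P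
    rw [(hE1' P).fderiv, (hE2 P).fderiv]
    funext i
    fin_cases i <;>
      simp [D2, E1', E2, E3', v5, v6, v7, ContinuousLinearMap.pi_apply] <;> ring
  · funext P
    show fderiv ℝ E3 P (E1 P) - fderiv ℝ E1 P (E3 P) = E4 P
    rw [(hE1 P).fderiv, (hE3 P).fderiv]
    funext i
    fin_cases i <;>
      simp [D1, D3, E1, E3, E4, v5, v6, v7, ContinuousLinearMap.pi_apply] <;> ring
  · funext P
    show fderiv ℝ E3' P (E1 P) - fderiv ℝ E1 P (E3' P) = E4' P
    rw [(hE1 P).fderiv, (hE3' P).fderiv]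
    funext i
    fin_cases i <;>
      simp [D1, D3', E1, E3', E4', v5, v6, v7, ContinuousLinearMap.pi_apply] <;> ring
  · funext P
    show fderiv ℝ E3 P (E1' P) - fderiv ℝ E1' P (E3 P) = E4' P
    rw [(hE1' P).fderiv, (hE3 P).fderiv]
    funext i
    fin_cases i <;>
      simp [D3, E1', E3, E4', v5, v6, v7, ContinuousLinearMap.pi_apply] <;> ring
  · funext P
    show fderiv ℝ E3' P (E1' P) - fderiv ℝ E1' P (E3' P) = E4'' P
    rw [(hE1' P).fderiv, (hE3' P).fderiv]
    funext i
    fin_cases i <;>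
      simp [D3', E1', E3', E4'', v5, v6, v7, ContinuousLinearMap.pi_apply] <;> ring
  · funext P
    show fderiv ℝ E4 P (E1 P) - fderiv ℝ E1 P (E4 P) = 0
    rw [(hE1 P).fderiv, (hE4 P).fderiv]
    funext i
    fin_cases i <;>
      simp [D1, E1, E4, v5, v6, v7, ContinuousLinearMap.pi_apply] <;> ring
  · funext P
    show fderiv ℝ E4' P (E1 P) - fderiv ℝ E1 P (E4' P) = 0
    rw [(hE1 P).fderiv, (hE4' P).fderiv]
    funext i
    fin_cases i <;>
      simp [D1, E1, E4', v5, v6, v7, ContinuousLinearMap.pi_apply] <;> ring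
  · funext P
    show fderiv ℝ E4'' P (E1 P) - fderiv ℝ E1 P (E4'' P) = 0
    rw [(hE1 P).fderiv, (hE4'' P).fderiv]
    funext i
    fin_cases i <;>
      simp [D1, E1, E4'', v5, v6, v7, ContinuousLinearMap.pi_apply] <;> ring
  · funext P
    show fderiv ℝ E4 P (E1' P) - fderiv ℝ E1' P (E4 P) = 0
    rw [(hE1' P).fderiv, (hE4 P).fderiv]
    simp
  · funext P
    show fderiv ℝ E4' P (E1' P) - fderiv ℝ E1' P (E4' P) = 0
    rw [(hE1' P).fderiv, (hE4' P).fderiv]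
    simp
  · funext P
    show fderiv ℝ E4'' P (E1' P) - fderiv ℝ E1' P (E4'' P) = 0
    rw [(hE1' P).fderiv, (hE4'' P).fderiv]
    simp
  · funext P
    show fderiv ℝ E3 P (E2 P) - fderiv ℝ E2 P (E3 P) = 0
    rw [(hE2 P).fderiv, (hE3 P).fderiv]
    funext i
    fin_cases i <;>
      simp [D2, D3, E2, E3, v5, v6, v7, ContinuousLinearMap.pi_apply] <;> ring
  · intro P
    rw [Fintype.linearIndependent_iff]
    intro g hg
    rw [Fin.sum_univ_eight] at hg
    have e0 : g 0 * -(1:ℝ) + g 1 * 0 + g 2 * 0 + g 3 * 0 + g 4 * 0 + g 5 * 0 + g 6 * 0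
        + g 7 * 0 = 0 := congrFun hg 0
    have e1 : g 0 * -(0:ℝ) + g 1 * 1 + g 2 * 0 + g 3 * 0 + g 4 * 0 + g 5 * 0 + g 6 * 0
        + g 7 * 0 = 0 := congrFun hg 1
    have e2 : g 0 * -(P 3) + g 1 * 0 + g 2 * 0 + g 3 * 0 + g 4 * 0 + g 5 * 1 + g 6 * 0
        + g 7 * 0 = 0 := congrFun hg 2
    have e3 : g 0 * -(P 5) + g 1 * 0 + g 2 * 0 + g 3 * 1 + g 4 * 0 + g 5 * 0 + g 6 * 0
        + g 7 * 0 = 0 := congrFun hg 3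
    have e4 : g 0 * -(P 6) + g 1 * 0 + g 2 * 0 + g 3 * P 1 + g 4 * 0 + g 5 * 0 + g 6 * 1
        + g 7 * 0 = 0 := congrFun hg 4
    have e5 : g 0 * -(P 1) + g 1 * 0 + g 2 * 1 + g 3 * 0 + g 4 * 0 + g 5 * 0 + g 6 * 0
        + g 7 * 0 = 0 := congrFun hg 5
    have e6 : g 0 * -((P 1) ^ 2 / 2) + g 1 * 0 + g 2 * P 1 + g 3 * 0 + g 4 * 1 + g 5 * 0
        + g 6 * 0 + g 7 * 0 = 0 := congrFun hg 6
    have e7 : g 0 * -((P 1) ^ 3 / 3) + g 1 * 0 + g 2 * (P 1) ^ 2 + g 3 * 0 + g 4 * (2 * P 1)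
        + g 5 * 0 + g 6 * 0 + g 7 * 2 = 0 := congrFun hg 7
    have hg0 : g 0 = 0 := by linarith
    have hg1 : g 1 = 0 := by linarith
    rw [hg0] at e2 e3 e4 e5 e6 e7
    have hg5 : g 5 = 0 := by linarith
    have hg3 : g 3 = 0 := by linarith
    have hg2 : g 2 = 0 := by linarith
    rw [hg3] at e4
    have hg6 : g 6 = 0 := by linarith
    rw [hg2] at e6 e7
    have hg4 : g 4 = 0 := by linarith
    rw [hg4] at e7
    have hg7 : g 7 = 0 := by linarith
    intro i
    fin_cases i <;> assumption
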